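/- For every bounded continuous function γ : ℝ^d → ℝ^d one has sup_{x ∈ ℝ^d} |γ(x)| ≤ sup_{(x,y) ∈ ℝ^d × ℝ^d} |γ(x)·(x − y)| / (2 + |x| + |y|), where γ(x)·(x − y) denotes the Euclidean inner product and |·| the Euclidean norm. -/

import Mathlib

open RealInnerProductSpace

theorem stmt14 {d : ℕ}
    (γ : EuclideanSpace ℝ (Fin d) → EuclideanSpace ℝ (Fin d))
    (hγc : Continuous γ) (hγb : ∃ M : ℝ, ∀ x, ‖γ x‖ ≤ M) :
    (⨆ x : EuclideanSpace ℝ (Fin d), ‖γ x‖) ≤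
      ⨆ p : EuclideanSpace ℝ (Fin d) × EuclideanSpace ℝ (Fin d),
        |⟪γ p.1, p.1 - p.2⟫| / (2 + ‖p.1‖ + ‖p.2‖) := by
  obtain ⟨M, hM⟩ := hγb
  set f : EuclideanSpace ℝ (Fin d) × EuclideanSpace ℝ (Fin d) → ℝ :=
    fun p => |⟪γ p.1, p.1 - p.2⟫| / (2 + ‖p.1‖ + ‖p.2‖) with hf
  have hbdd : BddAbove (Set.range f) := by
    refine ⟨max M 0, ?_⟩
    rintro _ ⟨p, rfl⟩
    have hden : (0:ℝ) < 2 + ‖p.1‖ + ‖p.2‖ := by positivity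
    rw [hf]
    rw [div_le_iff₀ hden]
    calc |⟪γ p.1, p.1 - p.2⟫| ≤ ‖γ p.1‖ * ‖p.1 - p.2‖ := abs_real_inner_le_norm _ _
      _ ≤ max M 0 * (2 + ‖p.1‖ + ‖p.2‖) := by
          have h1 : ‖γ p.1‖ ≤ max M 0 := (hM p.1).trans (le_max_left _ _)
          have h2 : ‖p.1 - p.2‖ ≤ 2 + ‖p.1‖ + ‖p.2‖ := by
            have := norm_sub_le p.1 p.2; linarith
          exact mul_le_mul h1 h2 (norm_nonneg _) (le_max_right _ _)
  apply ciSup_le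
  intro x
  apply le_of_forall_pos_le_add
  intro ε hε
  set a := ‖γ x‖ with ha
  set c : ℝ := 2 + 2 * ‖x‖ with hc
  have hcpos : 0 < c := by positivity
  set t : ℝ := c / ε with ht
  have htpos : 0 < t := div_pos hcpos hε
  set y : EuclideanSpace ℝ (Fin d) := x - t • γ x with hy
  have hfp : f (x, y) = t * a ^ 2 / (2 + ‖x‖ + ‖y‖) := by
    rw [hf]
    simp only [hy, sub_sub_cancel, real_inner_smul_right, real_inner_self_eq_norm_sq]
    rw [abs_of_nonneg (by positivity)]
  have hle : f (x, y) ≤ ⨆ p, f p := le_ciSup hbdd (x, y)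
  have hyn : ‖y‖ ≤ ‖x‖ + t * a := by
    rw [hy]
    calc ‖x - t • γ x‖ ≤ ‖x‖ + ‖t • γ x‖ := norm_sub_le _ _
      _ = ‖x‖ + t * a := by rw [norm_smul, Real.norm_eq_abs, abs_of_pos htpos]
  have hden : (0:ℝ) < 2 + ‖x‖ + ‖y‖ := by positivity
  have hden2 : 2 + ‖x‖ + ‖y‖ ≤ c + t * a := by rw [hc]; linarith
  have key : a ≤ t * a ^ 2 / (2 + ‖x‖ + ‖y‖) + ε := by
    rcases le_or_gt a ε with h | h
    · have : 0 ≤ t * a ^ 2 / (2 + ‖x‖ + ‖y‖) := by positivity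
      linarith
    · have h1 : t * a ^ 2 / (c + t * a) ≤ t * a ^ 2 / (2 + ‖x‖ + ‖y‖) :=
        div_le_div_of_nonneg_left (by positivity) hden hden2
      have hεt : ε * t = c := by rw [ht]; field_simp
      have h2 : a ≤ t * a ^ 2 / (c + t * a) + ε := by
        rw [← sub_le_iff_le_add, le_div_iff₀ (by positivity : (0:ℝ) < c + t * a)]
        nlinarith [mul_pos htpos (by linarith : (0:ℝ) < a)]
      linarith
  calc a ≤ t * a ^ 2 / (2 + ‖x‖ + ‖y‖) + ε := key
    _ = f (x, y) + ε := by rw [hfp]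
    _ ≤ (⨆ p, f p) + ε := by linarith
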